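/- Let 0 < λ ≤ 1 and let f ∈ 𝒜 with f'(z) ≠ 0 on 𝔻 and f(z) ≠ 0 for z ∈ 𝔻 \ {0}, and suppose z f'(z)/f(z) is not identically 1. If Re(1 + z f''(z)/f'(z) − z f'(z)/f(z)) < λ/2 for all z ∈ 𝔻, then there exists an integer n ≥ 1 such that z f'(z)/f(z) ≺ (1 + z^n)^{λ/n} on 𝔻. -/

import Mathlib

open Complex Metric Set intervalIntegral

/-- A function whose derivative vanishes on the unit ball is constant there. -/
lemma constBall {F : ℂ → ℂ} (hF : ∀ z ∈ ball (0:ℂ) 1, HasDerivAt F 0 z)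
    {z : ℂ} (hz : z ∈ ball (0:ℂ) 1) : F z = F 0 := by
  have hd : DifferentiableOn ℂ F (ball 0 1) := fun x hx =>
    (hF x hx).differentiableAt.differentiableWithinAt
  refine (convex_ball (0:ℂ) 1).is_const_of_fderivWithin_eq_zero hd (fun x hx => ?_) hz
    (mem_ball_self one_pos)
  rw [fderivWithin_eq_fderiv (isOpen_ball.uniqueDiffOn.uniqueDiffWithinAt hx)
    (hF x hx).differentiableAt]
  ext y
  have h1 : deriv F x = 0 := (hF x hx).deriv
  simp [← toSpanSingleton_deriv, h1]

/-- Radial-integration primitive of a holomorphic function on the unit ball. -/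
lemma exists_primitive {q : ℂ → ℂ} (hq : DifferentiableOn ℂ q (ball 0 1)) :
    ∃ g : ℂ → ℂ, g 0 = 0 ∧ ∀ z ∈ ball (0:ℂ) 1, HasDerivAt g (q z) z := by
  have hq' : DifferentiableOn ℂ (deriv q) (ball 0 1) :=
    ((hq.analyticOnNhd isOpen_ball).deriv).differentiableOn
  set I : ℂ → ℂ := fun z => ∫ t in (0:ℝ)..1, q ((t:ℂ) * z) with hI
  refine ⟨fun z => z * I z, by simp [hI], ?_⟩
  intro z₀ hz₀
  rw [mem_ball_zero_iff] at hz₀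
  set r : ℝ := (1 + ‖z₀‖) / 2 with hr
  have hr1 : r < 1 := by rw [hr]; linarith
  have hr0 : 0 ≤ r := by positivity
  set ε : ℝ := (1 - ‖z₀‖) / 2 with hε
  have hε0 : 0 < ε := by rw [hε]; linarith
  have hxr : ∀ x ∈ ball z₀ ε, ‖x‖ ≤ r := by
    intro x hx
    rw [mem_ball, dist_eq_norm] at hx
    calc ‖x‖ = ‖z₀ + (x - z₀)‖ := by ring_nf
    _ ≤ ‖z₀‖ + ‖x - z₀‖ := norm_add_le _ _
    _ ≤ ‖z₀‖ + ε := by linarith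
    _ = r := by rw [hε, hr]; ring
  have hsub : closedBall (0:ℂ) r ⊆ ball 0 1 := closedBall_subset_ball hr1
  -- bounds
  obtain ⟨C, hC⟩ := (isCompact_closedBall (0:ℂ) r).exists_bound_of_continuousOn
    (hq'.continuousOn.mono hsub)
  have hmem : ∀ (t : ℝ) (x : ℂ), |t| ≤ 1 → ‖x‖ ≤ r → (t:ℂ) * x ∈ closedBall (0:ℂ) r := by
    intro t x ht hx
    rw [mem_closedBall_zero_iff, norm_mul, Complex.norm_real, Real.norm_eq_abs]
    calc |t| * ‖x‖ ≤ 1 * r := by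
          apply mul_le_mul ht hx (norm_nonneg _) zero_le_one
    _ = r := one_mul r
  have hmemball : ∀ (t : ℝ) (x : ℂ), |t| ≤ 1 → ‖x‖ ≤ r → (t:ℂ) * x ∈ ball (0:ℂ) 1 :=
    fun t x ht hx => hsub (hmem t x ht hx)
  -- differentiation under the integral sign
  have key := intervalIntegral.hasDerivAt_integral_of_dominated_loc_of_deriv_le
    (F := fun x t => q ((t:ℂ) * x)) (F' := fun x t => deriv q ((t:ℂ) * x) * (t:ℂ))
    (x₀ := z₀) (a := 0) (b := 1) (μ := MeasureTheory.volume) (bound := fun _ => C) (ball_mem_nhds z₀ hε0)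
    ?_ ?_ ?_ ?_ ?_ ?_
  · obtain ⟨hint, hderiv⟩ := key
    have hG : HasDerivAt (fun z => z * I z)
        ((1:ℂ) * I z₀ + z₀ * ∫ t in (0:ℝ)..1, deriv q ((t:ℂ) * z₀) * (t:ℂ)) z₀ :=
      (hasDerivAt_id z₀).mul hderiv
    have hIint : IntervalIntegrable (fun t : ℝ => q ((t:ℂ) * z₀)) MeasureTheory.volume 0 1 := by
      apply ContinuousOn.intervalIntegrable
      apply (hq.continuousOn.comp (by fun_prop) ?_)
      intro t ht
      rw [uIcc_of_le zero_le_one] at ht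
      exact hmemball t z₀ (abs_le.2 ⟨by linarith [ht.1], ht.2⟩) (by rw [hr]; linarith)
    have hcombined : (1:ℂ) * I z₀ + z₀ * (∫ t in (0:ℝ)..1, deriv q ((t:ℂ) * z₀) * (t:ℂ)) = q z₀ := by
      rw [one_mul, hI, ← intervalIntegral.integral_const_mul,
        ← intervalIntegral.integral_add hIint (hint.const_mul z₀)]
      have hFTC := intervalIntegral.integral_eq_sub_of_hasDerivAt
        (f := fun t : ℝ => (t:ℂ) * q ((t:ℂ) * z₀))
        (f' := fun t : ℝ => q ((t:ℂ) * z₀) + z₀ * (deriv q ((t:ℂ) * z₀) * (t:ℂ)))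
        (a := 0) (b := 1) ?_ ?_
      · rw [hFTC]; simp
      · intro t ht
        rw [uIcc_of_le zero_le_one] at ht
        have htz : (t:ℂ) * z₀ ∈ ball (0:ℂ) 1 :=
          hmemball t z₀ (abs_le.2 ⟨by linarith [ht.1], ht.2⟩) (by rw [hr]; linarith)
        have h1 : HasDerivAt (fun s : ℂ => s * q (s * z₀))
            ((1:ℂ) * q ((t:ℂ) * z₀) + (t:ℂ) * (deriv q ((t:ℂ) * z₀) * ((1:ℂ) * z₀))) (t:ℂ) := by
          apply (hasDerivAt_id (t:ℂ)).mul
          exact ((hq.differentiableAt (isOpen_ball.mem_nhds htz)).hasDerivAt).comp (t:ℂ)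
            ((hasDerivAt_id (t:ℂ)).mul_const z₀)
        have h2 := h1.comp_ofReal
        refine h2.congr_deriv ?_
        ring
      · apply ContinuousOn.intervalIntegrable
        apply ContinuousOn.add
        · apply (hq.continuousOn.comp (by fun_prop) ?_)
          intro t ht
          rw [uIcc_of_le zero_le_one] at ht
          exact hmemball t z₀ (abs_le.2 ⟨by linarith [ht.1], ht.2⟩) (by rw [hr]; linarith)
        · apply ContinuousOn.mul continuousOn_const
          apply ContinuousOn.mul
          · apply (hq'.continuousOn.comp (by fun_prop) ?_)
            intro t ht
            rw [uIcc_of_le zero_le_one] at ht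
            exact hmemball t z₀ (abs_le.2 ⟨by linarith [ht.1], ht.2⟩) (by rw [hr]; linarith)
          · fun_prop
    rw [hcombined] at hG
    exact hG
  -- hF_meas
  · filter_upwards [ball_mem_nhds z₀ hε0] with x hx
    apply ContinuousOn.aestronglyMeasurable ?_ measurableSet_uIoc
    apply (hq.continuousOn.comp (by fun_prop) ?_)
    intro t ht
    rw [uIoc_of_le zero_le_one] at ht
    exact hmemball t x (abs_le.2 ⟨by linarith [ht.1], ht.2⟩) (hxr x hx)
  -- hF_int
  · apply ContinuousOn.intervalIntegrable
    apply (hq.continuousOn.comp (by fun_prop) ?_)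
    intro t ht
    rw [uIcc_of_le zero_le_one] at ht
    exact hmemball t z₀ (abs_le.2 ⟨by linarith [ht.1], ht.2⟩) (by rw [hr]; linarith)
  -- hF'_meas
  · apply ContinuousOn.aestronglyMeasurable ?_ measurableSet_uIoc
    apply ContinuousOn.mul
    · apply (hq'.continuousOn.comp (by fun_prop) ?_)
      intro t ht
      rw [uIoc_of_le zero_le_one] at ht
      exact hmemball t z₀ (abs_le.2 ⟨by linarith [ht.1], ht.2⟩) (by rw [hr]; linarith)
    · fun_prop
  -- h_bound
  · apply MeasureTheory.ae_of_all
    intro t ht x hx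
    rw [uIoc_of_le zero_le_one] at ht
    have h1 : (t:ℂ) * x ∈ closedBall (0:ℂ) r :=
      hmem t x (abs_le.2 ⟨by linarith [ht.1], ht.2⟩) (hxr x hx)
    have h2 := hC _ h1
    rw [norm_mul, Complex.norm_real, Real.norm_eq_abs]
    have h3 : |t| ≤ 1 := abs_le.2 ⟨by linarith [ht.1], ht.2⟩
    calc ‖deriv q ((t:ℂ) * x)‖ * |t| ≤ C * 1 := by
          apply mul_le_mul h2 h3 (abs_nonneg t) (le_trans (norm_nonneg _) h2)
    _ = C := mul_one C
  -- bound integrable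
  · exact intervalIntegrable_const
  -- h_diff
  · apply MeasureTheory.ae_of_all
    intro t ht x hx
    rw [uIoc_of_le zero_le_one] at ht
    have htx : (t:ℂ) * x ∈ ball (0:ℂ) 1 :=
      hmemball t x (abs_le.2 ⟨by linarith [ht.1], ht.2⟩) (hxr x hx)
    have h1 : HasDerivAt (fun y : ℂ => (t:ℂ) * y) ((t:ℂ) * 1) x := (hasDerivAt_id x).const_mul _
    have h2 := ((hq.differentiableAt (isOpen_ball.mem_nhds htx)).hasDerivAt).comp x h1
    refine h2.congr_deriv ?_
    ring

lemma exists_log {p : ℂ → ℂ} (hp : DifferentiableOn ℂ p (ball 0 1)) (hp0 : p 0 = 1)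
    (hpne : ∀ z ∈ ball (0:ℂ) 1, p z ≠ 0) :
    ∃ g : ℂ → ℂ, g 0 = 0 ∧ (∀ z ∈ ball (0:ℂ) 1, HasDerivAt g (deriv p z / p z) z) ∧
      ∀ z ∈ ball (0:ℂ) 1, Complex.exp (g z) = p z := by
  have hq : DifferentiableOn ℂ (fun z => deriv p z / p z) (ball 0 1) :=
    ((hp.analyticOnNhd isOpen_ball).deriv.differentiableOn).div hp hpne
  obtain ⟨g, hg0, hg⟩ := exists_primitive hq
  refine ⟨g, hg0, hg, ?_⟩
  have key : ∀ z ∈ ball (0:ℂ) 1, p z * Complex.exp (-g z) = 1 := by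
    intro z hz
    have hF : ∀ x ∈ ball (0:ℂ) 1, HasDerivAt (fun y => p y * Complex.exp (-g y)) 0 x := by
      intro x hx
      have hpx : HasDerivAt p (deriv p x) x :=
        (hp.differentiableAt (isOpen_ball.mem_nhds hx)).hasDerivAt
      have hgx := ((hg x hx).neg).cexp
      have := hpx.mul hgx
      refine this.congr_deriv ?_
      field_simp [hpne x hx]
      ring
    have := constBall hF hz
    rw [this, hg0, hp0]
    simp
  intro z hz
  have h1 := key z hz
  rw [Complex.exp_neg] at h1
  field_simp at h1
  exact h1.symm

lemma jack {w : ℂ → ℂ} (hw : DifferentiableOn ℂ w (ball 0 1)) (hw0 : w 0 = 0)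
    (hex : ∃ z ∈ ball (0:ℂ) 1, 1 ≤ ‖w z‖) :
    ∃ z₀ ∈ ball (0:ℂ) 1, z₀ ≠ 0 ∧ ‖w z₀‖ = 1 ∧
      ∃ k : ℝ, 1 ≤ k ∧ z₀ * deriv w z₀ = (k:ℂ) * w z₀ := by
  obtain ⟨z₁, hz₁, hwz₁⟩ := hex
  rw [mem_ball_zero_iff] at hz₁
  set r : ℝ := (1 + ‖z₁‖) / 2 with hr
  have hr1 : r < 1 := by rw [hr]; linarith
  have hz₁r : ‖z₁‖ ≤ r := by rw [hr]; linarith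
  have hKsub : closedBall (0:ℂ) r ⊆ ball 0 1 := closedBall_subset_ball hr1
  set S : Set ℂ := closedBall (0:ℂ) r ∩ (fun z => ‖w z‖) ⁻¹' (Ici 1) with hS
  have hSclosed : IsClosed S :=
    ContinuousOn.preimage_isClosed_of_isClosed ((hw.continuousOn.mono hKsub).norm)
      Metric.isClosed_closedBall isClosed_Ici
  have hScompact : IsCompact S :=
    (isCompact_closedBall (0:ℂ) r).of_isClosed_subset hSclosed inter_subset_left
  have hSne : S.Nonempty := ⟨z₁, by rw [mem_closedBall_zero_iff]; exact hz₁r, hwz₁⟩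
  obtain ⟨z₀, hz₀S, hz₀min⟩ := hScompact.exists_isMinOn hSne continuous_norm.continuousOn
  rw [isMinOn_iff] at hz₀min
  have hz₀K : ‖z₀‖ ≤ r := mem_closedBall_zero_iff.1 hz₀S.1
  have hz₀w : 1 ≤ ‖w z₀‖ := hz₀S.2
  have hz₀lt1 : ‖z₀‖ < 1 := lt_of_le_of_lt hz₀K hr1
  have hz₀ball : z₀ ∈ ball (0:ℂ) 1 := mem_ball_zero_iff.2 hz₀lt1
  have hz₀ne : z₀ ≠ 0 := by
    intro h
    rw [h, hw0] at hz₀w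
    rw [norm_zero] at hz₀w
    linarith
  set r₀ : ℝ := ‖z₀‖ with hr₀
  have hr₀pos : 0 < r₀ := norm_pos_iff.2 hz₀ne
  -- strict bound inside radius r₀
  have hlt : ∀ z : ℂ, ‖z‖ < r₀ → ‖w z‖ < 1 := by
    intro z hz
    by_contra h
    push_neg at h
    have hzS : z ∈ S := ⟨mem_closedBall_zero_iff.2 (le_trans hz.le hz₀K), h⟩
    exact absurd (hz₀min z hzS) (by simpa using hz)
  -- weak bound up to radius r₀
  have hle : ∀ z : ℂ, ‖z‖ ≤ r₀ → ‖w z‖ ≤ 1 := by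
    intro z hz
    have hzball : z ∈ ball (0:ℂ) 1 := mem_ball_zero_iff.2 (lt_of_le_of_lt hz hz₀lt1)
    have hcont : ContinuousAt w z :=
      (hw.differentiableAt (isOpen_ball.mem_nhds hzball)).continuousAt
    have htend : Filter.Tendsto (fun t : ℝ => ‖w ((t:ℂ) * z)‖) (nhdsWithin 1 (Iio 1))
        (nhds ‖w z‖) := by
      have h1 : Filter.Tendsto (fun t : ℝ => (t:ℂ) * z) (nhdsWithin 1 (Iio 1)) (nhds z) := by
        have : Filter.Tendsto (fun t : ℝ => (t:ℂ) * z) (nhds 1) (nhds (((1:ℝ):ℂ) * z)) :=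
          ((Complex.continuous_ofReal.mul continuous_const).tendsto 1)
        rw [Complex.ofReal_one, one_mul] at this
        exact this.mono_left nhdsWithin_le_nhds
      exact (continuous_norm.continuousAt.tendsto.comp (hcont.tendsto.comp h1))
    refine le_of_tendsto htend ?_
    filter_upwards [Ioo_mem_nhdsLT_of_mem (⟨zero_lt_one, le_refl (1:ℝ)⟩ : (1:ℝ) ∈ Ioc 0 1)]
      with t ht
    apply le_of_lt (hlt _ _)
    rw [norm_mul, Complex.norm_real, Real.norm_eq_abs, abs_of_pos ht.1]
    calc t * ‖z‖ ≤ t * r₀ := by nlinarith [ht.1.le]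
    _ < 1 * r₀ := by nlinarith [ht.2]
    _ = r₀ := one_mul r₀
  have hwz₀ : ‖w z₀‖ = 1 := le_antisymm (hle z₀ le_rfl) hz₀w
  -- Schwarz lemma on the ball of radius r₀
  have hschwarz : ∀ z : ℂ, ‖z‖ < r₀ → ‖w z‖ ≤ ‖z‖ / r₀ := by
    intro z hz
    have hz' : z ∈ ball (0:ℂ) r₀ := mem_ball_zero_iff.2 hz
    have hmaps : MapsTo w (ball (0:ℂ) r₀) (ball (w 0) 1) := by
      intro x hx
      rw [hw0, mem_ball_zero_iff]
      exact hlt x (mem_ball_zero_iff.1 hx)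
    have := Complex.dist_le_div_mul_dist_of_mapsTo_ball
      (hw.mono (ball_subset_ball hz₀lt1.le)) (hmaps.mono_right ball_subset_closedBall) hz'
    rw [hw0, dist_zero_right, dist_zero_right] at this
    calc ‖w z‖ ≤ 1 / r₀ * ‖z‖ := this
    _ = ‖z‖ / r₀ := by ring
  have hwd : HasDerivAt w (deriv w z₀) z₀ :=
    (hw.differentiableAt (isOpen_ball.mem_nhds hz₀ball)).hasDerivAt
  set d : ℂ := deriv w z₀ with hd
  set κ : ℂ := (starRingEnd ℂ) (w z₀) * (z₀ * d) with hκ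
  -- radial derivative estimate : κ.re ≥ 1
  have hradial : 1 ≤ κ.re := by
    set e : ℂ := z₀ / (r₀:ℂ) with he
    have hr₀ne : (r₀:ℂ) ≠ 0 := by
      simp only [ne_eq, Complex.ofReal_eq_zero]
      exact hr₀pos.ne'
    have hez : (r₀:ℂ) * e = z₀ := by rw [he]; field_simp
    have hψd : HasDerivAt (fun t : ℝ => w ((t:ℂ) * e)) (d * ((1:ℂ) * e)) r₀ := by
      have h1 : HasDerivAt (fun s : ℂ => s * e) ((1:ℂ) * e) ((r₀:ℝ):ℂ) :=
        (hasDerivAt_id _).mul_const e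
      have h2 : HasDerivAt w d (((r₀:ℝ):ℂ) * e) := by rw [hez]; exact hwd
      exact (HasDerivAt.comp (((r₀:ℝ)):ℂ) h2 h1).comp_ofReal
    set ψ : ℝ → ℂ := fun t => w ((t:ℂ) * e) with hψ
    set v : ℂ := d * ((1:ℂ) * e) with hv
    have hψre : HasDerivAt (fun t => (ψ t).re) v.re r₀ :=
      (Complex.reCLM.hasFDerivAt.comp_hasDerivAt r₀ hψd)
    have hψim : HasDerivAt (fun t => (ψ t).im) v.im r₀ :=
      (Complex.imCLM.hasFDerivAt.comp_hasDerivAt r₀ hψd)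
    set A : ℝ → ℝ := fun t => (ψ t).re ^ 2 + (ψ t).im ^ 2 with hA
    have hAnorm : ∀ t, A t = ‖ψ t‖ ^ 2 := by
      intro t
      rw [hA, Complex.sq_norm, Complex.normSq_apply]
      ring
    have hAd : HasDerivAt A (2 * (ψ r₀).re * v.re + 2 * (ψ r₀).im * v.im) r₀ := by
      have := (hψre.pow 2).add (hψim.pow 2)
      refine this.congr_deriv ?_
      ring
    have hψr₀ : ψ r₀ = w z₀ := by rw [hψ]; simp only []; rw [hez]
    have hA1 : A r₀ = 1 := by rw [hAnorm, hψr₀, hwz₀]; norm_num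
    -- slope comparison
    have hslope := hasDerivAt_iff_tendsto_slope.1 hAd
    have hF : (nhdsWithin r₀ (Ioo 0 r₀)).NeBot := by
      apply mem_closure_iff_nhdsWithin_neBot.mp
      rw [closure_Ioo hr₀pos.ne]
      exact ⟨hr₀pos.le, le_refl r₀⟩
    have hslope' : Filter.Tendsto (slope A r₀) (nhdsWithin r₀ (Ioo 0 r₀))
        (nhds (2 * (ψ r₀).re * v.re + 2 * (ψ r₀).im * v.im)) :=
      hslope.mono_left (nhdsWithin_mono r₀ (fun t ht => ne_of_lt ht.2))
    have hBtend : Filter.Tendsto (fun t : ℝ => (r₀ + t) / r₀ ^ 2) (nhdsWithin r₀ (Ioo 0 r₀))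
        (nhds ((r₀ + r₀) / r₀ ^ 2)) := by
      apply Filter.Tendsto.mono_left ?_ nhdsWithin_le_nhds
      exact ((continuous_const.add continuous_id).div_const (r₀ ^ 2)).tendsto r₀
    have hcomp : 2 / r₀ ≤ 2 * (ψ r₀).re * v.re + 2 * (ψ r₀).im * v.im := by
      have h2r : (r₀ + r₀) / r₀ ^ 2 = 2 / r₀ := by field_simp; ring
      rw [← h2r]
      refine le_of_tendsto_of_tendsto hBtend hslope' ?_
      filter_upwards [self_mem_nhdsWithin] with t ht
      have ht0 : 0 < t := ht.1
      have htr : t < r₀ := ht.2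
      have hψt : ‖ψ t‖ ≤ t / r₀ := by
        have hnorm : ‖(t:ℂ) * e‖ = t := by
          rw [norm_mul, he, norm_div, Complex.norm_real, Complex.norm_real,
            Real.norm_eq_abs, Real.norm_eq_abs, abs_of_pos hr₀pos, abs_of_pos ht0, ← hr₀]
          field_simp
        have := hschwarz ((t:ℂ) * e) (by rw [hnorm]; exact htr)
        rwa [hnorm] at this
      have hAt : A t ≤ t ^ 2 / r₀ ^ 2 := by
        rw [hAnorm]
        calc ‖ψ t‖ ^ 2 ≤ (t / r₀) ^ 2 := by
              apply pow_le_pow_left₀ (norm_nonneg _) hψt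
        _ = t ^ 2 / r₀ ^ 2 := by ring
      rw [slope_def_field, hA1, le_div_iff_of_neg (by linarith : t - r₀ < 0)]
      have hkey : (r₀ + t) / r₀ ^ 2 * (t - r₀) = t ^ 2 / r₀ ^ 2 - 1 := by
        field_simp
        ring
      rw [hkey]
      linarith [hAt]
    -- convert to κ.re
    have hκe : κ = (r₀:ℂ) * ((starRingEnd ℂ) (w z₀) * v) := by
      rw [hκ, hv, ← hez]; ring
    have hκre : κ.re = r₀ * ((w z₀).re * v.re + (w z₀).im * v.im) := by
      rw [hκe]
      simp [Complex.mul_re, Complex.mul_im, Complex.conj_re, Complex.conj_im]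
    rw [hκre]
    rw [hψr₀] at hcomp
    have h2' := mul_le_mul_of_nonneg_left hcomp hr₀pos.le
    have h2'' : r₀ * (2 / r₀) = 2 := by field_simp
    rw [h2''] at h2'
    nlinarith [h2']
  -- angular derivative : κ.im = 0
  have hangular : κ.im = 0 := by
    have hχd : HasDerivAt (fun θ : ℝ => w (Complex.exp ((θ:ℂ) * Complex.I) * z₀))
        (d * (Complex.exp ((0:ℂ) * Complex.I) * (1 * Complex.I) * z₀)) 0 := by
      have h1 : HasDerivAt (fun s : ℂ => s * Complex.I) ((1:ℂ) * Complex.I) 0 :=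
        (hasDerivAt_id _).mul_const Complex.I
      have h2 : HasDerivAt (fun s : ℂ => Complex.exp (s * Complex.I))
          (Complex.exp ((0:ℂ) * Complex.I) * (1 * Complex.I)) 0 := h1.cexp
      have h3 := h2.mul_const z₀
      have h4 : HasDerivAt w d (Complex.exp ((0:ℂ) * Complex.I) * z₀) := by
        simp only [zero_mul, Complex.exp_zero, one_mul]
        exact hwd
      have h5 := (h4.comp (0:ℂ) h3)
      have h6 := h5.comp_ofReal (z := (0:ℝ))
      convert h6 using 2 <;> simp
    set v : ℂ := d * (Complex.exp ((0:ℂ) * Complex.I) * (1 * Complex.I) * z₀) with hv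
    set χ : ℝ → ℂ := fun θ => w (Complex.exp ((θ:ℂ) * Complex.I) * z₀) with hχ
    have hχre : HasDerivAt (fun θ => (χ θ).re) v.re 0 :=
      (Complex.reCLM.hasFDerivAt.comp_hasDerivAt 0 hχd)
    have hχim : HasDerivAt (fun θ => (χ θ).im) v.im 0 :=
      (Complex.imCLM.hasFDerivAt.comp_hasDerivAt 0 hχd)
    set φ : ℝ → ℝ := fun θ => (χ θ).re ^ 2 + (χ θ).im ^ 2 with hφ
    have hφd : HasDerivAt φ (2 * (χ 0).re * v.re + 2 * (χ 0).im * v.im) 0 := by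
      have := (hχre.pow 2).add (hχim.pow 2)
      refine this.congr_deriv ?_
      ring
    have hχ0 : χ 0 = w z₀ := by
      rw [hχ]; simp
    have hmax : IsLocalMax φ 0 := by
      apply Filter.Eventually.of_forall
      intro θ
      have hnorm : ‖Complex.exp ((θ:ℂ) * Complex.I) * z₀‖ = r₀ := by
        rw [norm_mul, Complex.norm_exp_ofReal_mul_I, one_mul, hr₀]
      have hχθ : ‖χ θ‖ ≤ 1 := hle _ (le_of_eq hnorm)
      have h1 : φ θ = ‖χ θ‖ ^ 2 := by
        rw [hφ, Complex.sq_norm, Complex.normSq_apply]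
        ring
      have h0 : φ 0 = 1 := by
        have : ‖χ 0‖ ^ 2 = 1 := by rw [hχ0, hwz₀]; norm_num
        rw [Complex.sq_norm, Complex.normSq_apply] at this
        show (χ 0).re ^ 2 + (χ 0).im ^ 2 = 1
        nlinarith [this]
      rw [h1, h0]
      nlinarith [norm_nonneg (χ θ)]
    have hzero := hmax.hasDerivAt_eq_zero hφd
    rw [hχ0] at hzero
    -- κ.im from hzero
    have hveq : v = Complex.I * (z₀ * d) := by rw [hv]; simp; ring
    have hkey : κ.im = -((w z₀).re * v.re + (w z₀).im * v.im) := by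
      rw [hveq, hκ]
      simp [Complex.mul_re, Complex.mul_im, Complex.conj_re, Complex.conj_im]
      ring
    rw [hkey]
    linarith [hzero]
  refine ⟨z₀, hz₀ball, hz₀ne, hwz₀, κ.re, hradial, ?_⟩
  have hκval : κ = (κ.re : ℂ) := by
    apply Complex.ext
    · simp
    · simp [hangular]
  have hmulconj : w z₀ * (starRingEnd ℂ) (w z₀) = 1 := by
    rw [Complex.mul_conj]
    rw [Complex.normSq_eq_norm_sq, hwz₀]
    norm_num
  calc z₀ * d = w z₀ * (starRingEnd ℂ) (w z₀) * (z₀ * d) := by rw [hmulconj]; ring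
  _ = w z₀ * κ := by rw [hκ]; ring
  _ = (κ.re : ℂ) * w z₀ := by rw [← hκval]; ring

lemma re_half {ζ : ℂ} (h1 : ‖ζ‖ = 1) (h2 : (1:ℂ) + ζ ≠ 0) : (ζ / (1 + ζ)).re = 1 / 2 := by
  have hsq : ζ.re ^ 2 + ζ.im ^ 2 = 1 := by
    have : ‖ζ‖ ^ 2 = 1 := by rw [h1]; norm_num
    rw [Complex.sq_norm, Complex.normSq_apply] at this
    nlinarith [this]
  have hne : (1:ℝ) + ζ.re ≠ 0 := by
    intro h
    apply h2
    have him : ζ.im = 0 := by nlinarith [hsq]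
    apply Complex.ext
    · simp only [Complex.add_re, Complex.one_re, Complex.zero_re]; linarith
    · simp [Complex.add_im, him]
  have hns : Complex.normSq (1 + ζ) = 2 * (1 + ζ.re) := by
    rw [Complex.normSq_apply]
    simp only [Complex.add_re, Complex.add_im, Complex.one_re, Complex.one_im]
    nlinarith [hsq]
  rw [Complex.div_re, hns]
  simp only [Complex.add_re, Complex.add_im, Complex.one_re, Complex.one_im]
  field_simp
  nlinarith [hsq]


open Complex Metric

/-- `p ≺ q` on the unit disk: there is an analytic `ω : 𝔻 → 𝔻` with `ω 0 = 0`
and `p = q ∘ ω` on `𝔻`. -/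
def Subord (p q : ℂ → ℂ) : Prop :=
  ∃ ω : ℂ → ℂ, DifferentiableOn ℂ ω (ball 0 1) ∧
    Set.MapsTo ω (ball 0 1) (ball 0 1) ∧ ω 0 = 0 ∧
    ∀ z ∈ ball (0:ℂ) 1, p z = q (ω z)

/-- Let `0 < λ ≤ 1`, `f ∈ 𝒜` with `f' ≠ 0` on `𝔻` and `f ≠ 0` on `𝔻 \ {0}`.
Let `p` be the analytic function on `𝔻` equal to `z f'(z)/f(z)` for `z ≠ 0` (and `p 0 = 1`),
and suppose `p` is not identically `1`. If `Re (1 + z f''(z)/f'(z) − z f'(z)/f(z)) < λ/2`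
on `𝔻`, then there is an integer `n ≥ 1` with `z f'(z)/f(z) ≺ (1 + z^n)^{λ/n}` on `𝔻`. -/
theorem stmt2 (lam : ℝ) (hlam0 : 0 < lam) (hlam1 : lam ≤ 1)
    (f : ℂ → ℂ)
    (hf : DifferentiableOn ℂ f (ball 0 1))
    (hf0 : f 0 = 0) (hfd0 : deriv f 0 = 1)
    (hfd : ∀ z ∈ ball (0:ℂ) 1, deriv f z ≠ 0)
    (hfne : ∀ z ∈ ball (0:ℂ) 1, z ≠ 0 → f z ≠ 0)
    (p : ℂ → ℂ)
    (hpdiff : DifferentiableOn ℂ p (ball 0 1))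
    (hp0 : p 0 = 1)
    (hpval : ∀ z ∈ ball (0:ℂ) 1, z ≠ 0 → p z = z * deriv f z / f z)
    (hpne1 : ¬ (∀ z ∈ ball (0:ℂ) 1, p z = 1))
    (hre : ∀ z ∈ ball (0:ℂ) 1,
      (1 + z * deriv (deriv f) z / deriv f z - p z).re < lam / 2) :
    ∃ n : ℕ, 1 ≤ n ∧
      Subord p (fun z => Complex.exp (((lam / n : ℝ) : ℂ) * Complex.log (1 + z ^ n))) := by
  have hlamC : ((lam : ℝ) : ℂ) ≠ 0 := by
    simp only [ne_eq, Complex.ofReal_eq_zero]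
    exact hlam0.ne'
  have hpne : ∀ z ∈ ball (0:ℂ) 1, p z ≠ 0 := by
    intro z hz
    rcases eq_or_ne z 0 with h | h
    · rw [h, hp0]; exact one_ne_zero
    · rw [hpval z hz h]
      exact div_ne_zero (mul_ne_zero h (hfd z hz)) (hfne z hz h)
  obtain ⟨g, hg0, hgd, hgexp⟩ := exists_log hpdiff hp0 hpne
  set u : ℂ → ℂ := fun z => Complex.exp (g z / (lam : ℂ)) with hu
  set ω : ℂ → ℂ := fun z => u z - 1 with hω
  have hune : ∀ z, u z ≠ 0 := fun z => Complex.exp_ne_zero _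
  have hud : ∀ z ∈ ball (0:ℂ) 1, HasDerivAt u (deriv p z / p z / (lam:ℂ) * u z) z := by
    intro z hz
    have h2 := ((hgd z hz).div_const (lam:ℂ)).cexp
    refine h2.congr_deriv ?_
    ring
  have hωd : ∀ z ∈ ball (0:ℂ) 1, HasDerivAt ω (deriv p z / p z / (lam:ℂ) * u z) z :=
    fun z hz => (hud z hz).sub_const 1
  have hωdiff : DifferentiableOn ℂ ω (ball 0 1) := fun z hz =>
    ((hωd z hz).differentiableAt).differentiableWithinAt
  have hω0 : ω 0 = 0 := by
    rw [hω, hu]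
    simp [hg0]
  -- the key bound on Re (z p'/p)
  have hbound : ∀ z ∈ ball (0:ℂ) 1, (z * (deriv p z / p z)).re < lam / 2 := by
    intro z hz
    rcases eq_or_ne z 0 with h | h
    · rw [h]
      simp only [zero_mul, Complex.zero_re]
      linarith
    · have hfz : f z ≠ 0 := hfne z hz h
      have hfdz : deriv f z ≠ 0 := hfd z hz
      have hdfz : HasDerivAt f (deriv f z) z :=
        (hf.differentiableAt (isOpen_ball.mem_nhds hz)).hasDerivAt
      have hdf2 : HasDerivAt (deriv f) (deriv (deriv f) z) z := by
        have h' := ((hf.analyticOnNhd isOpen_ball).deriv).differentiableOn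
        exact (h'.differentiableAt (isOpen_ball.mem_nhds hz)).hasDerivAt
      have hpev : p =ᶠ[nhds z] fun w => w * deriv f w / f w := by
        have hopen : IsOpen (ball (0:ℂ) 1 \ {0}) := isOpen_ball.sdiff isClosed_singleton
        filter_upwards [hopen.mem_nhds ⟨hz, h⟩] with x hx
        exact hpval x hx.1 hx.2
      have hnum : HasDerivAt (fun w => w * deriv f w)
          ((1:ℂ) * deriv f z + z * deriv (deriv f) z) z := (hasDerivAt_id z).mul hdf2
      have hq : HasDerivAt (fun w => w * deriv f w / f w)
          ((((1:ℂ) * deriv f z + z * deriv (deriv f) z) * f z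
            - z * deriv f z * deriv f z) / f z ^ 2) z := hnum.div hdfz hfz
      have hdp : deriv p z = (((1:ℂ) * deriv f z + z * deriv (deriv f) z) * f z
          - z * deriv f z * deriv f z) / f z ^ 2 := by
        rw [hpev.deriv_eq]
        exact hq.deriv
      have hiden : z * (deriv p z / p z)
          = 1 + z * deriv (deriv f) z / deriv f z - p z := by
        rw [hdp, hpval z hz h]
        field_simp
      rw [hiden]
      exact hre z hz
  -- |ω| < 1 on the ball, via Jack's lemma
  have hω1 : ∀ z ∈ ball (0:ℂ) 1, ‖ω z‖ < 1 := by
    by_contra hcon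
    push_neg at hcon
    obtain ⟨z₁, hz₁, hz₁w⟩ := hcon
    obtain ⟨z₀, hz₀, hz₀ne, hζ1, k, hk, heq⟩ := jack hωdiff hω0 ⟨z₁, hz₁, hz₁w⟩
    set ζ : ℂ := ω z₀ with hζ
    have hu1ζ : u z₀ = 1 + ζ := by rw [hζ, hω]; ring
    have h1ζne : (1:ℂ) + ζ ≠ 0 := by rw [← hu1ζ]; exact hune z₀
    have hderivω : deriv ω z₀ = deriv p z₀ / p z₀ / (lam:ℂ) * u z₀ := (hωd z₀ hz₀).deriv
    rw [hderivω] at heq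
    have hzA : z₀ * (deriv p z₀ / p z₀) = ((lam * k : ℝ):ℂ) * (ζ / (1 + ζ)) := by
      rw [← hu1ζ]
      push_cast
      have h2 : z₀ * (deriv p z₀ / p z₀) =
          (z₀ * (deriv p z₀ / p z₀ / (lam:ℂ) * u z₀)) * (lam:ℂ) / u z₀ := by
        field_simp [hune z₀, hpne z₀ hz₀, hlamC]
      rw [h2, heq]
      field_simp
    have hrehalf : (ζ / (1 + ζ)).re = 1 / 2 := re_half hζ1 h1ζne
    have hrere : (z₀ * (deriv p z₀ / p z₀)).re = (lam * k) * (1/2) := by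
      rw [hzA, Complex.re_ofReal_mul, hrehalf]
    have := hbound z₀ hz₀
    rw [hrere] at this
    nlinarith [this, hk, hlam0]
  -- positivity of Re u
  have hure : ∀ z ∈ ball (0:ℂ) 1, 0 < (u z).re := by
    intro z hz
    have h := hω1 z hz
    rw [hω] at h
    have h2 : |(u z - 1).re| ≤ ‖u z - 1‖ := by
      exact Complex.abs_re_le_norm _
    simp only [Complex.sub_re, Complex.one_re] at h2
    have := abs_le.1 h2
    linarith [this.1]
  -- log u = g / lam
  have hlog : ∀ z ∈ ball (0:ℂ) 1, Complex.log (u z) = g z / (lam:ℂ) := by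
    intro z hz
    have hFd : ∀ x ∈ ball (0:ℂ) 1,
        HasDerivAt (fun y => Complex.log (u y) - g y / (lam:ℂ)) 0 x := by
      intro x hx
      have hlogd : HasDerivAt Complex.log (u x)⁻¹ (u x) :=
        Complex.hasDerivAt_log (Or.inl (hure x hx))
      have hcomp := hlogd.comp x (hud x hx)
      have hdiff := hcomp.sub ((hgd x hx).div_const (lam:ℂ))
      refine hdiff.congr_deriv ?_
      field_simp [hune x, hpne x hx, hlamC]
      ring
    have hu0 : u 0 = 1 := by rw [hu]; simp [hg0]
    have h3 : Complex.log (u z) - g z / (lam:ℂ) = Complex.log (u 0) - g 0 / (lam:ℂ) :=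
      constBall hFd hz
    rw [hu0, Complex.log_one, hg0, zero_div, sub_zero] at h3
    exact sub_eq_zero.mp h3
  -- assemble
  refine ⟨1, le_refl 1, ω, hωdiff, ?_, hω0, ?_⟩
  · intro z hz
    exact mem_ball_zero_iff.2 (hω1 z hz)
  · intro z hz
    have h1 : (1:ℂ) + ω z ^ 1 = u z := by rw [hω]; ring
    have h2 : ((lam / (1:ℕ) : ℝ) : ℂ) = (lam:ℂ) := by norm_num
    show p z = Complex.exp (((lam / (1:ℕ) : ℝ) : ℂ) * Complex.log (1 + ω z ^ 1))
    rw [h1, h2, hlog z hz, ← hgexp z hz]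
    congr 1
    field_simp
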